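/- Let f: ℕ → ℝ≥0 satisfy 0 < f(k) < f(k−1) + f(2) for every k ≥ 3. Then for every n ≥ 2 and every tree T with n leaves, 𝔠_{MDM,f}(T) ≤ ((f(0)+f(2))/4)·(n−1)(n−2), with equality if and only if T is isomorphic to the comb K_n. Hence 𝔠_{MDM,f} attains its maximum on 𝒯*_n exactly at the comb. -/

import Mathlib

/-- Rooted trees encoded as a root together with the list of subtrees
rooted at its children. -/
inductive MTree : Type
  | node : List MTree → MTree

namespace MTree

/-- Number of leaves of a tree (a single node counts as one leaf). -/
def leafCount : MTree → ℕ
  | node ts => max 1 (ts.attach.map (fun x => leafCount x.1)).sum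
decreasing_by
  have := List.sizeOf_lt_of_mem x.2
  simp only [node.sizeOf_spec]; omega

/-- `deltaF f T = Σ_{v ∈ V(T)} f (deg v)`, the `f`-size of `T`. -/
noncomputable def deltaF (f : ℕ → ℝ) : MTree → ℝ
  | node ts => f ts.length + (ts.attach.map (fun x => deltaF f x.1)).sum
decreasing_by
  have := List.sizeOf_lt_of_mem x.2
  simp only [node.sizeOf_spec]; omega

/-- The Colless-like index relative to a "dissimilarity" `D` and a function `f`:
the sum, over all internal nodes `v`, of `D` applied to the list of `f`-sizes of
the subtrees rooted at the children of `v`. -/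
noncomputable def cIndex (D : List ℝ → ℝ) (f : ℕ → ℝ) : MTree → ℝ
  | node ts => (if ts.isEmpty then 0 else D (ts.map (deltaF f)))
      + (ts.attach.map (fun x => cIndex D f x.1)).sum
decreasing_by
  have := List.sizeOf_lt_of_mem x.2
  simp only [node.sizeOf_spec]; omega

/-- The Colless index of a (bifurcating) tree: the sum over the internal nodes of the
absolute value of the difference of the numbers of leaves of the two child subtrees. -/
def colless : MTree → ℕ
  | node ts =>
      (match ts with
       | [a, b] => ((a.leafCount : ℤ) - (b.leafCount : ℤ)).natAbs
       | _ => 0)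
      + (ts.attach.map (fun x => colless x.1)).sum
decreasing_by
  have := List.sizeOf_lt_of_mem x.2
  simp only [node.sizeOf_spec]; omega

/-- The quadratic Colless index of a (bifurcating) tree. -/
def collessSq : MTree → ℕ
  | node ts =>
      (match ts with
       | [a, b] => ((a.leafCount : ℤ) - (b.leafCount : ℤ)).natAbs ^ 2
       | _ => 0)
      + (ts.attach.map (fun x => collessSq x.1)).sum
decreasing_by
  have := List.sizeOf_lt_of_mem x.2
  simp only [node.sizeOf_spec]; omega

/-- A tree in the sense of the paper: no node of out-degree 1. -/
inductive WellFormed : MTree → Prop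
  | node {ts : List MTree} : ts.length ≠ 1 → (∀ t ∈ ts, WellFormed t) →
      WellFormed (node ts)

/-- A bifurcating tree: every internal node has out-degree exactly 2. -/
inductive Bifurcating : MTree → Prop
  | node {ts : List MTree} : (ts.length = 0 ∨ ts.length = 2) →
      (∀ t ∈ ts, Bifurcating t) → Bifurcating (node ts)

/-- Isomorphism of (list-encoded) trees: the lists of child subtrees match up to
a permutation and recursively isomorphic subtrees. -/
inductive Iso : MTree → MTree → Prop
  | node {ts us vs : List MTree} :
      List.Forall₂ Iso ts vs → vs.Perm us → Iso (node ts) (node us)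

/-- A tree is fully symmetric when, for every internal node, the subtrees rooted at
its children are pairwise isomorphic. -/
inductive FullySymmetric : MTree → Prop
  | node {ts : List MTree} : (∀ s ∈ ts, ∀ t ∈ ts, Iso s t) →
      (∀ t ∈ ts, FullySymmetric t) → FullySymmetric (node ts)

/-- The comb `K_n` with `n ≥ 1` leaves. -/
def comb : ℕ → MTree
  | 0 => node []
  | 1 => node []
  | n + 2 => node [node [], comb (n + 1)]

/-- The star `FS_n`, whose root has `n` children, all of them leaves. -/
def star (n : ℕ) : MTree := node (List.replicate n (node []))

/-- The median of a list of real numbers. -/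
noncomputable def median (l : List ℝ) : ℝ :=
  let s := l.mergeSort (fun a b => a ≤ b)
  if l.length % 2 = 1 then s.getD (l.length / 2) 0
  else (s.getD (l.length / 2 - 1) 0 + s.getD (l.length / 2) 0) / 2

/-- The mean deviation from the median of a list of real numbers. -/
noncomputable def MDM (l : List ℝ) : ℝ :=
  (l.map (fun x => |x - median l|)).sum / l.length

/-- The sample variance of a list of real numbers. -/
noncomputable def svar (l : List ℝ) : ℝ :=
  (l.map (fun x => (x - l.sum / l.length) ^ 2)).sum / ((l.length : ℝ) - 1)

/-- The sample standard deviation of a list of real numbers. -/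
noncomputable def ssd (l : List ℝ) : ℝ := Real.sqrt (svar l)


theorem strongInd {P : MTree → Prop}
    (h : ∀ ts : List MTree, (∀ t ∈ ts, P t) → P (node ts)) : ∀ T, P T := by
  have H : ∀ n (T : MTree), sizeOf T ≤ n → P T := by
    intro n
    induction n with
    | zero =>
      intro T hT
      cases T with
      | node ts => simp only [MTree.node.sizeOf_spec] at hT; omega
    | succ n IH =>
      intro T hT
      cases T with
      | node ts =>
        apply h
        intro t ht
        apply IH
        have := List.sizeOf_lt_of_mem ht
        simp only [MTree.node.sizeOf_spec] at hT
        omega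
  intro T; exact H (sizeOf T) T le_rfl

theorem leafCount_node (ts : List MTree) :
    leafCount (node ts) = max 1 (ts.map leafCount).sum := by
  rw [leafCount, List.attach_map_val]

theorem deltaF_node (f : ℕ → ℝ) (ts : List MTree) :
    deltaF f (node ts) = f ts.length + (ts.map (deltaF f)).sum := by
  rw [deltaF, List.attach_map_val]

theorem cIndex_node (D : List ℝ → ℝ) (f : ℕ → ℝ) (ts : List MTree) :
    cIndex D f (node ts) = (if ts.isEmpty then 0 else D (ts.map (deltaF f)))
      + (ts.map (cIndex D f)).sum := by
  rw [cIndex, List.attach_map_val]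

theorem one_le_leafCount (T : MTree) : 1 ≤ T.leafCount := by
  cases T with
  | node ts => rw [leafCount_node]; exact le_max_left _ _

theorem length_le_sum_leafCount (ts : List MTree) :
    ts.length ≤ (ts.map leafCount).sum := by
  have : (List.map (fun _ => 1) ts).sum ≤ (ts.map leafCount).sum :=
    List.sum_le_sum (fun t _ => one_le_leafCount t)
  simpa using this

theorem leafCount_node_of_ne_nil {ts : List MTree} (h : ts ≠ []) :
    leafCount (node ts) = (ts.map leafCount).sum := by
  rw [leafCount_node]
  have h1 : 1 ≤ ts.length := List.length_pos_iff.mpr h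
  have := length_le_sum_leafCount ts
  omega

theorem sortedD_mono {s : List ℝ} (hs : List.Pairwise (· ≤ ·) s) {i j : ℕ}
    (hij : i ≤ j) (hj : j < s.length) : s.getD i 0 ≤ s.getD j 0 := by
  have hi : i < s.length := lt_of_le_of_lt hij hj
  rw [List.getD_eq_getElem _ _ hi, List.getD_eq_getElem _ _ hj]
  rcases eq_or_lt_of_le hij with rfl | h
  · exact le_rfl
  · exact List.pairwise_iff_getElem.mp hs i j hi hj h

theorem getD_mem {s : List ℝ} {i : ℕ} (h : i < s.length) : s.getD i 0 ∈ s := by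
  rw [List.getD_eq_getElem _ _ h]; exact List.getElem_mem h

theorem median_facts (l : List ℝ) (hne : l ≠ []) :
    ∃ s : List ℝ, s.Perm l ∧
      (∀ i < l.length / 2, s.getD i 0 ≤ median l) ∧
      (∀ i, l.length / 2 ≤ i → i < l.length → median l ≤ s.getD i 0) ∧
      (l.length % 2 = 1 → median l = s.getD (l.length / 2) 0) := by
  set s := l.mergeSort (fun a b => a ≤ b) with hs
  have hperm : s.Perm l := List.mergeSort_perm _ _
  have hlen : s.length = l.length := hperm.length_eq
  have hsort : List.Pairwise (fun a b : ℝ => a ≤ b) s := by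
    have := List.pairwise_mergeSort (le := fun a b : ℝ => a ≤ b)
      (fun a b c hab hbc => by
        simp only [decide_eq_true_eq] at *; exact le_trans hab hbc)
      (fun a b => by simp [le_total]) l
    exact this.imp (fun h => by simpa using h)
  have hk : 1 ≤ l.length := List.length_pos_iff.mpr hne
  have hm : l.length / 2 < l.length := Nat.div_lt_self (by omega) (by omega)
  have hmed : median l = if l.length % 2 = 1 then s.getD (l.length / 2) 0
      else (s.getD (l.length / 2 - 1) 0 + s.getD (l.length / 2) 0) / 2 := by
    rw [median]
  refine ⟨s, hperm, ?_, ?_, ?_⟩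
  · intro i hi
    rcases Nat.even_or_odd l.length with he | ho
    · have h2 : l.length % 2 = 0 := Nat.even_iff.mp he
      rw [hmed, if_neg (by omega : ¬ l.length % 2 = 1)]
      have h1 : s.getD i 0 ≤ s.getD (l.length / 2 - 1) 0 :=
        sortedD_mono hsort (by omega) (by omega)
      have h2' : s.getD (l.length / 2 - 1) 0 ≤ s.getD (l.length / 2) 0 :=
        sortedD_mono hsort (by omega) (by omega)
      linarith
    · have h2 : l.length % 2 = 1 := Nat.odd_iff.mp ho
      rw [hmed, if_pos h2]
      exact sortedD_mono hsort (by omega) (by omega)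
  · intro i hi hik
    rcases Nat.even_or_odd l.length with he | ho
    · have h2 : l.length % 2 = 0 := Nat.even_iff.mp he
      rw [hmed, if_neg (by omega : ¬ l.length % 2 = 1)]
      have h1 : s.getD (l.length / 2) 0 ≤ s.getD i 0 :=
        sortedD_mono hsort hi (by omega)
      have h2' : s.getD (l.length / 2 - 1) 0 ≤ s.getD (l.length / 2) 0 :=
        sortedD_mono hsort (by omega) (by omega)
      linarith
    · have h2 : l.length % 2 = 1 := Nat.odd_iff.mp ho
      rw [hmed, if_pos h2]
      exact sortedD_mono hsort hi (by omega)
  · intro h2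
    rw [hmed, if_pos h2]

theorem sum_map_eq_range (t : List ℝ) (φ : ℝ → ℝ) :
    (t.map φ).sum = ∑ i ∈ Finset.range t.length, φ (t.getD i 0) := by
  induction t with
  | nil => simp
  | cons a t ih =>
    simp only [List.map_cons, List.sum_cons, List.length_cons]
    rw [Finset.sum_range_succ', ih]
    simp [List.getD]
    ring

theorem MDM_le_of_mem_Icc {l : List ℝ} (hne : l ≠ []) {lo hi : ℝ}
    (h : ∀ x ∈ l, lo ≤ x ∧ x ≤ hi) : MDM l ≤ (hi - lo) / 2 := by
  obtain ⟨s, hperm, hlow, hhigh, hodd⟩ := median_facts l hne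
  set M := median l with hM
  set k := l.length with hk
  set m := k / 2 with hm
  have hks : s.length = k := hperm.length_eq
  have hk1 : 1 ≤ k := List.length_pos_iff.mpr hne
  have hmem : ∀ i, i < k → lo ≤ s.getD i 0 ∧ s.getD i 0 ≤ hi := fun i hi =>
    h _ (hperm.subset (getD_mem (by omega)))
  have hlohi : lo ≤ hi := by
    have := hmem 0 (by omega); linarith [this.1, this.2]
  -- pairing claim
  have pair : ∀ i < k, |s.getD i 0 - M| + |s.getD (k - 1 - i) 0 - M| ≤ hi - lo := by
    intro i hi
    by_cases h1 : i < m
    · have hle : s.getD i 0 ≤ M := hlow i h1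
      have hge : M ≤ s.getD (k - 1 - i) 0 := hhigh _ (by omega) (by omega)
      rw [abs_of_nonpos (by linarith), abs_of_nonneg (by linarith)]
      have := (hmem i hi).1
      have := (hmem (k - 1 - i) (by omega)).2
      linarith
    · by_cases h2 : k - 1 - i < m
      · have hle : s.getD (k - 1 - i) 0 ≤ M := hlow _ h2
        have hge : M ≤ s.getD i 0 := hhigh i (by omega) hi
        rw [abs_of_nonneg (by linarith), abs_of_nonpos (by linarith)]
        have := (hmem i hi).2
        have := (hmem (k - 1 - i) (by omega)).1
        linarith
      · -- middle: k odd, i = m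
        have hkodd : k % 2 = 1 := by omega
        have hieq : i = m := by omega
        have : M = s.getD m 0 := hodd hkodd
        rw [hieq]
        have hmi : k - 1 - m = m := by omega
        rw [hmi, this]
        simp
        linarith
  -- sum bound
  have hsum : ∑ i ∈ Finset.range k, |s.getD i 0 - M| ≤ k * (hi - lo) / 2 := by
    have hrefl : ∑ i ∈ Finset.range k, |s.getD (k - 1 - i) 0 - M|
        = ∑ i ∈ Finset.range k, |s.getD i 0 - M| :=
        Finset.sum_range_reflect (fun i => |s.getD i 0 - M|) k
    have h2 : (∑ i ∈ Finset.range k, |s.getD i 0 - M|) * 2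
        = ∑ i ∈ Finset.range k, (|s.getD i 0 - M| + |s.getD (k - 1 - i) 0 - M|) := by
      rw [Finset.sum_add_distrib, hrefl]; ring
    have h3 : ∑ i ∈ Finset.range k, (|s.getD i 0 - M| + |s.getD (k - 1 - i) 0 - M|)
        ≤ k * (hi - lo) := by
      calc _ ≤ (Finset.range k).card • (hi - lo) :=
              Finset.sum_le_card_nsmul _ _ _ (fun i hi => pair i (Finset.mem_range.mp hi))
        _ = k * (hi - lo) := by simp [nsmul_eq_mul]
    linarith
  -- conclude
  have hMDM : MDM l = (∑ i ∈ Finset.range k, |s.getD i 0 - M|) / k := by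
    rw [MDM]
    have : (l.map (fun x => |x - M|)).sum = (s.map (fun x => |x - M|)).sum :=
      ((hperm.map _).sum_eq).symm
    rw [this, sum_map_eq_range, hks]
  rw [hMDM]
  rw [div_le_div_iff₀ (by positivity) (by norm_num : (0:ℝ) < 2)]
  calc (∑ i ∈ Finset.range k, |s.getD i 0 - M|) * 2 ≤ (k * (hi - lo) / 2) * 2 := by linarith
    _ = (hi - lo) * k := by ring

theorem median_pair (x y : ℝ) : median [x, y] = (x + y) / 2 := by
  have hp : (([x, y]).mergeSort (fun a b => a ≤ b)).Perm [x, y] := List.mergeSort_perm _ _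
  have hl : (([x, y]).mergeSort (fun a b => a ≤ b)).length = 2 := by
    simpa using hp.length_eq
  obtain ⟨a, b, hab⟩ := List.length_eq_two.mp hl
  have hsum : a + b = x + y := by
    have := hp.sum_eq; rw [hab] at this; simpa using this
  rw [median]
  simp only [List.length_cons, List.length_nil, hab]
  norm_num [List.getD]
  try linarith

theorem MDM_pair (x y : ℝ) : MDM [x, y] = |x - y| / 2 := by
  rw [MDM, median_pair]
  simp only [List.map_cons, List.map_nil, List.sum_cons, List.sum_nil,
    List.length_cons, List.length_nil]
  have h1 : |x - (x + y) / 2| = |x - y| / 2 := by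
    have : x - (x + y) / 2 = (x - y) / 2 := by ring
    rw [this, abs_div]; simp
  have h2 : |y - (x + y) / 2| = |x - y| / 2 := by
    have : y - (x + y) / 2 = -((x - y) / 2) := by ring
    rw [this, abs_neg, abs_div]; simp
  rw [h1, h2]
  ring

theorem mergeSort_pairwise (l : List ℝ) :
    List.Pairwise (fun a b : ℝ => a ≤ b) (l.mergeSort (fun a b => a ≤ b)) := by
  have := List.pairwise_mergeSort (le := fun a b : ℝ => a ≤ b)
    (fun a b c hab hbc => by
      simp only [decide_eq_true_eq] at *; exact le_trans hab hbc)
    (fun a b => by simp [le_total]) l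
  exact this.imp (fun h => by simpa using h)

theorem median_perm {l l' : List ℝ} (h : l.Perm l') : median l = median l' := by
  have hs : l.mergeSort (fun a b => a ≤ b) = l'.mergeSort (fun a b => a ≤ b) := by
    exact List.Perm.eq_of_pairwise (le := fun a b : ℝ => a ≤ b)
      (fun a b _ _ h1 h2 => le_antisymm h1 h2)
      (mergeSort_pairwise l) (mergeSort_pairwise l')
      (((List.mergeSort_perm _ _).trans h).trans (List.mergeSort_perm _ _).symm)
  rw [median, median, hs, h.length_eq]

theorem MDM_perm {l l' : List ℝ} (h : l.Perm l') : MDM l = MDM l' := by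
  rw [MDM, MDM, median_perm h, h.length_eq, (h.map _).sum_eq]

theorem iso_refl : ∀ T, Iso T T := by
  apply strongInd
  intro ts IH
  exact Iso.node (List.forall₂_same.mpr IH) (List.Perm.refl _)

theorem forall₂_map_eq {φ : MTree → ℝ} :
    ∀ {ts vs : List MTree}, List.Forall₂ Iso ts vs →
      (∀ t ∈ ts, ∀ u, Iso t u → φ t = φ u) → ts.map φ = vs.map φ := by
  intro ts vs h
  induction h with
  | nil => intro _; rfl
  | @cons a b l1 l2 hab _ ih =>
    intro H
    simp only [List.map_cons]
    rw [H a (List.mem_cons_self) b hab, ih (fun t ht u hu => H t (List.mem_cons_of_mem _ ht) u hu)]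

theorem forall₂_map_eq_nat {φ : MTree → ℕ} :
    ∀ {ts vs : List MTree}, List.Forall₂ Iso ts vs →
      (∀ t ∈ ts, ∀ u, Iso t u → φ t = φ u) → ts.map φ = vs.map φ := by
  intro ts vs h
  induction h with
  | nil => intro _; rfl
  | @cons a b l1 l2 hab _ ih =>
    intro H
    simp only [List.map_cons]
    rw [H a (List.mem_cons_self) b hab, ih (fun t ht u hu => H t (List.mem_cons_of_mem _ ht) u hu)]

theorem iso_leafCount : ∀ T U, Iso T U → leafCount T = leafCount U := by
  apply strongInd (P := fun T => ∀ U, Iso T U → leafCount T = leafCount U)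
  intro ts IH U hIso
  cases hIso with
  | @node _ us vs h1 h2 =>
    rw [leafCount_node, leafCount_node]
    have hmap : ts.map leafCount = vs.map leafCount := forall₂_map_eq_nat h1 IH
    have : (vs.map leafCount).Perm (us.map leafCount) := h2.map _
    rw [hmap, this.sum_eq]

theorem iso_deltaF (f : ℕ → ℝ) : ∀ T U, Iso T U → deltaF f T = deltaF f U := by
  apply strongInd (P := fun T => ∀ U, Iso T U → deltaF f T = deltaF f U)
  intro ts IH U hIso
  cases hIso with
  | @node _ us vs h1 h2 =>
    rw [deltaF_node, deltaF_node]
    have hmap : ts.map (deltaF f) = vs.map (deltaF f) := forall₂_map_eq h1 IH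
    have hperm : (vs.map (deltaF f)).Perm (us.map (deltaF f)) := h2.map _
    rw [hmap, hperm.sum_eq, h1.length_eq, h2.length_eq]

theorem iso_cIndex (f : ℕ → ℝ) : ∀ T U, Iso T U → cIndex MDM f T = cIndex MDM f U := by
  apply strongInd (P := fun T => ∀ U, Iso T U → cIndex MDM f T = cIndex MDM f U)
  intro ts IH U hIso
  cases hIso with
  | @node _ us vs h1 h2 =>
    rw [cIndex_node, cIndex_node]
    have hmapδ : ts.map (deltaF f) = vs.map (deltaF f) :=
      forall₂_map_eq h1 (fun t _ u hu => iso_deltaF f t u hu)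
    have hpermδ : (vs.map (deltaF f)).Perm (us.map (deltaF f)) := h2.map _
    have hmapc : ts.map (cIndex MDM f) = vs.map (cIndex MDM f) := forall₂_map_eq h1 IH
    have hpermc : (vs.map (cIndex MDM f)).Perm (us.map (cIndex MDM f)) := h2.map _
    have hemp : ts.isEmpty = us.isEmpty := by
      have h1' := h1.length_eq
      have h2' := h2.length_eq
      rcases ts with _ | ⟨a, ts⟩ <;> rcases us with _ | ⟨b, us⟩ <;>
        simp_all [List.isEmpty]
    rw [hemp, hmapc, hpermc.sum_eq]
    congr 1
    by_cases h : us.isEmpty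
    · simp [h]
    · simp only [h, if_false, Bool.false_eq_true]
      rw [hmapδ, MDM_perm hpermδ]

theorem comb_succ_eq {n : ℕ} (h : 1 ≤ n) : comb (n + 1) = node [node [], comb n] := by
  rcases n with _ | m
  · omega
  · rfl

theorem comb_facts (f : ℕ → ℝ) (hf0 : 0 ≤ f 0) (hf2 : 0 ≤ f 2) :
    ∀ n : ℕ, 1 ≤ n →
      deltaF f (comb n) = (n : ℝ) * f 0 + ((n : ℝ) - 1) * f 2 ∧
      cIndex MDM f (comb n) = (f 0 + f 2) / 4 * ((n : ℝ) - 1) * ((n : ℝ) - 2) := by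
  intro n hn
  induction n, hn using Nat.le_induction with
  | base =>
    constructor
    · show deltaF f (node []) = _
      rw [deltaF_node]; simp
    · show cIndex MDM f (node []) = _
      rw [cIndex_node]; simp
  | succ n hn ih =>
    obtain ⟨ihδ, ihc⟩ := ih
    rw [comb_succ_eq hn]
    have hδleaf : deltaF f (node []) = f 0 := by rw [deltaF_node]; simp
    have hcleaf : cIndex MDM f (node []) = 0 := by rw [cIndex_node]; simp
    constructor
    · rw [deltaF_node]
      simp only [List.map_cons, List.map_nil, List.sum_cons, List.sum_nil]
      rw [hδleaf, ihδ]
      simp only [List.length_cons, List.length_nil]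
      push_cast
      ring
    · rw [cIndex_node]
      simp only [List.map_cons, List.map_nil, List.sum_cons, List.sum_nil, List.isEmpty]
      rw [hδleaf, hcleaf, ihδ, ihc, MDM_pair]
      have hn1 : (1 : ℝ) ≤ (n : ℝ) := by exact_mod_cast hn
      have habs : |f 0 - ((n : ℝ) * f 0 + ((n : ℝ) - 1) * f 2)| =
          ((n : ℝ) - 1) * (f 0 + f 2) := by
        rw [abs_of_nonpos (by nlinarith)]
        ring
      rw [if_neg (by simp), habs]
      push_cast
      ring

theorem eq_leaf_of_lc_one {T : MTree} (hwf : WellFormed T) (h : leafCount T = 1) :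
    T = node [] := by
  cases T with
  | node ts =>
    cases hwf with
    | node hlen _ =>
      rcases eq_or_ne ts [] with rfl | hne
      · rfl
      · exfalso
        rw [leafCount_node_of_ne_nil hne] at h
        have h1 := length_le_sum_leafCount ts
        have h2 := List.length_pos_iff.mpr hne
        omega

theorem f_le_of_hf (f : ℕ → ℝ) (hf : ∀ k, 3 ≤ k → 0 < f k ∧ f k < f (k - 1) + f 2) :
    ∀ k, 2 ≤ k → f k ≤ ((k : ℝ) - 1) * f 2 := by
  intro k hk
  induction k, hk using Nat.le_induction with
  | base => norm_num
  | succ k hk ih =>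
    have h := (hf (k + 1) (by omega)).2
    have heq : k + 1 - 1 = k := by omega
    rw [heq] at h
    push_cast
    linarith

theorem cast_sum_lc (ts : List MTree) :
    (((ts.map leafCount).sum : ℕ) : ℝ) = (List.map (fun t => (leafCount t : ℝ)) ts).sum := by
  rw [Nat.cast_list_sum, List.map_map]
  rfl

theorem deltaF_ge (f : ℕ → ℝ) (hf0 : ∀ n, 0 ≤ f n) :
    ∀ T, f 0 * (leafCount T : ℝ) ≤ deltaF f T := by
  apply strongInd
  intro ts IH
  rcases eq_or_ne ts [] with rfl | hne
  · rw [deltaF_node, leafCount_node]; simp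
  · rw [deltaF_node, leafCount_node_of_ne_nil hne, cast_sum_lc]
    have h1 : (List.map (fun t => f 0 * (leafCount t : ℝ)) ts).sum
        ≤ (ts.map (deltaF f)).sum := List.sum_le_sum (fun t ht => IH t ht)
    rw [List.sum_map_mul_left] at h1
    have := hf0 ts.length
    linarith

theorem deltaF_ge' (f : ℕ → ℝ) (hf0 : ∀ n, 0 ≤ f n) (T : MTree) : f 0 ≤ deltaF f T := by
  have h := deltaF_ge f hf0 T
  have h1 : (1 : ℝ) ≤ (leafCount T : ℝ) := by exact_mod_cast one_le_leafCount T
  nlinarith [hf0 0]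

theorem sum_affine (a b : ℝ) (l : List MTree) (φ : MTree → ℝ) :
    (List.map (fun x => φ x * a + (φ x - 1) * b) l).sum
      = (List.map φ l).sum * a + ((List.map φ l).sum - l.length) * b := by
  induction l with
  | nil => simp
  | cons x l ih =>
    simp only [List.map_cons, List.sum_cons, List.length_cons, ih]
    push_cast
    ring

theorem deltaF_le (f : ℕ → ℝ) (hf0 : ∀ n, 0 ≤ f n)
    (hf : ∀ k, 3 ≤ k → 0 < f k ∧ f k < f (k - 1) + f 2) :
    ∀ T, WellFormed T →
      deltaF f T ≤ (leafCount T : ℝ) * f 0 + ((leafCount T : ℝ) - 1) * f 2 := by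
  apply strongInd
  intro ts IH hwf
  cases hwf with
  | node hlen hwfc =>
    rcases eq_or_ne ts [] with rfl | hne
    · rw [deltaF_node, leafCount_node]; simp
    · have hk2 : 2 ≤ ts.length := by
        have := List.length_pos_iff.mpr hne; omega
      rw [deltaF_node, leafCount_node_of_ne_nil hne, cast_sum_lc]
      have h1 : (ts.map (deltaF f)).sum ≤
          (List.map (fun t => (leafCount t : ℝ) * f 0 + ((leafCount t : ℝ) - 1) * f 2) ts).sum :=
        List.sum_le_sum (fun t ht => IH t ht (hwfc t ht))
      rw [sum_affine] at h1
      have h2 : f ts.length ≤ ((ts.length : ℝ) - 1) * f 2 := f_le_of_hf f hf ts.length hk2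
      linarith

theorem length_le_sum_real : ∀ l : List ℝ, (∀ x ∈ l, 1 ≤ x) → (l.length : ℝ) ≤ l.sum := by
  intro l
  induction l with
  | nil => simp
  | cons a l ih =>
    intro h
    simp only [List.length_cons, List.sum_cons]
    have h1 := h a (List.mem_cons_self)
    have h2 := ih (fun x hx => h x (List.mem_cons_of_mem _ hx))
    push_cast
    linarith

theorem sum_g_le (l : List ℝ) (hne : l ≠ []) (h1 : ∀ x ∈ l, 1 ≤ x) :
    (List.map (fun x => (x - 1) * (x - 2)) l).sum
      ≤ (l.sum - l.length) * (l.sum - l.length - 1) := by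
  induction l with
  | nil => simp at hne
  | cons a l ih =>
    rcases eq_or_ne l [] with rfl | hne'
    · simp only [List.map_cons, List.map_nil, List.sum_cons, List.sum_nil,
        List.length_cons, List.length_nil]
      push_cast
      ring_nf
      exact le_rfl
    · have ha := h1 a (List.mem_cons_self)
      have hl := fun x hx => h1 x (List.mem_cons_of_mem _ hx)
      have ih' := ih hne' hl
      have hlen := length_le_sum_real l hl
      simp only [List.map_cons, List.sum_cons, List.length_cons]
      push_cast
      nlinarith [hlen, ha, ih']

theorem wf_inv {ts : List MTree} (h : WellFormed (node ts)) :
    ts.length ≠ 1 ∧ ∀ t ∈ ts, WellFormed t := by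
  cases h with
  | node h1 h2 => exact ⟨h1, h2⟩

theorem lc_child_bound {ts : List MTree} {t : MTree} (ht : t ∈ ts) :
    leafCount t + (ts.length - 1) ≤ (ts.map leafCount).sum := by
  obtain ⟨l1, l2, rfl⟩ := List.append_of_mem ht
  simp only [List.map_append, List.map_cons, List.sum_append, List.sum_cons,
    List.length_append, List.length_cons]
  have h1 := length_le_sum_leafCount l1
  have h2 := length_le_sum_leafCount l2
  omega

set_option maxHeartbeats 2000000 in
theorem main_lemma (f : ℕ → ℝ) (hf0 : ∀ n, 0 ≤ f n)
    (hf : ∀ k, 3 ≤ k → 0 < f k ∧ f k < f (k - 1) + f 2) :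
    ∀ T, WellFormed T →
      cIndex MDM f T ≤ (f 0 + f 2) / 4 * ((leafCount T : ℝ) - 1) * ((leafCount T : ℝ) - 2) ∧
      (cIndex MDM f T = (f 0 + f 2) / 4 * ((leafCount T : ℝ) - 1) * ((leafCount T : ℝ) - 2) ↔
        Iso T (comb (leafCount T))) := by
  have hf2 : 0 < f 2 := by
    have h3 := hf 3 (by omega)
    norm_num at h3
    linarith [h3.1, h3.2]
  have hc : 0 < (f 0 + f 2) / 4 := by linarith [hf0 0]
  apply strongInd
  intro ts IH hwf
  obtain ⟨hlen, hwfc⟩ := wf_inv hwf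
  rcases eq_or_ne ts [] with rfl | hne
  · have hlc : leafCount (node ([] : List MTree)) = 1 := by rw [leafCount_node]; simp
    have hci : cIndex MDM f (node ([] : List MTree)) = 0 := by rw [cIndex_node]; simp
    rw [hlc, hci]
    refine ⟨by norm_num, ?_, ?_⟩
    · intro _; exact iso_refl _
    · intro _; norm_num
  · have hpos := List.length_pos_iff.mpr hne
    have hk2 : 2 ≤ ts.length := by omega
    have hlc : leafCount (node ts) = (ts.map leafCount).sum := leafCount_node_of_ne_nil hne
    rw [hlc]
    set c := (f 0 + f 2) / 4 with hcdef
    set S : ℕ := (ts.map leafCount).sum with hSdef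
    have hkS : ts.length ≤ S := length_le_sum_leafCount ts
    set kr : ℝ := (ts.length : ℝ) with hkr
    set Sr : ℝ := (S : ℝ) with hSr
    have hkr2 : (2 : ℝ) ≤ kr := by rw [hkr]; exact_mod_cast hk2
    have hkrS : kr ≤ Sr := by rw [hkr, hSr]; exact_mod_cast hkS
    have hS1 : 2 ≤ S := by omega
    -- interval bounds for delta values
    have hlo : ∀ x ∈ ts.map (deltaF f),
        f 0 ≤ x ∧ x ≤ (Sr - kr + 1) * f 0 + (Sr - kr) * f 2 := by
      intro x hx
      obtain ⟨t, ht, rfl⟩ := List.mem_map.mp hx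
      refine ⟨deltaF_ge' f hf0 t, ?_⟩
      have h1 := deltaF_le f hf0 hf t (hwfc t ht)
      have h2 : leafCount t + ts.length ≤ S + 1 := by
        have := lc_child_bound ht
        omega
      have h3 : (leafCount t : ℝ) + kr ≤ Sr + 1 := by
        rw [hkr, hSr]; exact_mod_cast h2
      have h4 : (1 : ℝ) ≤ (leafCount t : ℝ) := by exact_mod_cast one_le_leafCount t
      nlinarith [hf0 0, hf2.le,
        mul_nonneg (by linarith : (0:ℝ) ≤ Sr - kr + 1 - (leafCount t : ℝ))
          (by linarith [hf0 0, hf2.le] : (0:ℝ) ≤ f 0 + f 2)]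
    have hMDM : MDM (ts.map (deltaF f))
        ≤ ((Sr - kr + 1) * f 0 + (Sr - kr) * f 2 - f 0) / 2 :=
      MDM_le_of_mem_Icc (by simp [hne]) hlo
    -- children sum bound
    have hsum : (ts.map (cIndex MDM f)).sum ≤ c * ((Sr - kr) * (Sr - kr - 1)) := by
      have h1 : (ts.map (cIndex MDM f)).sum ≤
          (List.map (fun t => c * (((leafCount t : ℝ) - 1) * ((leafCount t : ℝ) - 2))) ts).sum := by
        apply List.sum_le_sum
        intro t ht
        calc cIndex MDM f t ≤ c * ((leafCount t : ℝ) - 1) * ((leafCount t : ℝ) - 2) :=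
              (IH t ht (hwfc t ht)).1
          _ = c * (((leafCount t : ℝ) - 1) * ((leafCount t : ℝ) - 2)) := by ring
      rw [List.sum_map_mul_left] at h1
      have h3 := sum_g_le (List.map (fun t => (leafCount t : ℝ)) ts)
        (by simp [hne])
        (by
          intro x hx
          obtain ⟨t, ht, rfl⟩ := List.mem_map.mp hx
          exact_mod_cast one_le_leafCount t)
      rw [List.map_map] at h3
      have h4 : (List.map (fun t => (leafCount t : ℝ)) ts).sum = Sr := (cast_sum_lc ts).symm
      have h5 : (List.map (fun t => (leafCount t : ℝ)) ts).length = ts.length :=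
        List.length_map _
      rw [h4, h5] at h3
      have h6 : (List.map ((fun x => (x - 1) * (x - 2)) ∘ fun t => (leafCount t : ℝ)) ts).sum
          = (List.map (fun t => (((leafCount t : ℝ)) - 1) * (((leafCount t : ℝ)) - 2)) ts).sum := by
        rfl
      rw [h6] at h3
      have h7 := mul_le_mul_of_nonneg_left h3 hc.le
      calc (ts.map (cIndex MDM f)).sum
          ≤ c * (List.map (fun t => (((leafCount t : ℝ)) - 1) * (((leafCount t : ℝ)) - 2)) ts).sum := h1
        _ ≤ c * ((Sr - kr) * (Sr - kr - 1)) := h7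
    have hci : cIndex MDM f (node ts)
        = MDM (ts.map (deltaF f)) + (ts.map (cIndex MDM f)).sum := by
      rw [cIndex_node, if_neg (by simp only [List.isEmpty_iff]; exact hne)]
    have hLE' : cIndex MDM f (node ts) ≤ c * ((Sr - kr) * (Sr - kr + 1)) := by
      rw [hci]
      have he1 : ((Sr - kr + 1) * f 0 + (Sr - kr) * f 2 - f 0) / 2 = 2 * c * (Sr - kr) := by
        rw [hcdef]; ring
      have he2 : c * ((Sr - kr) * (Sr - kr + 1))
          = 2 * c * (Sr - kr) + c * ((Sr - kr) * (Sr - kr - 1)) := by ring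
      linarith
    have hmono : c * ((Sr - kr) * (Sr - kr + 1)) ≤ c * ((Sr - 1) * (Sr - 2)) := by
      have hkey : (Sr - kr) * (Sr - kr + 1) ≤ (Sr - 1) * (Sr - 2) := by
        nlinarith [mul_nonneg (by linarith : (0:ℝ) ≤ kr - 2)
          (by linarith : (0:ℝ) ≤ 2 * Sr - kr - 1)]
      exact mul_le_mul_of_nonneg_left hkey hc.le
    have hLE : cIndex MDM f (node ts) ≤ c * (Sr - 1) * (Sr - 2) := by
      have := mul_assoc c (Sr - 1) (Sr - 2)
      linarith
    refine ⟨hLE, ?_, ?_⟩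
    · -- equality implies comb
      intro heq
      have hkeq : ts.length = 2 := by
        by_contra hk3'
        have hk3 : 3 ≤ ts.length := by omega
        have hkr3 : (3 : ℝ) ≤ kr := by rw [hkr]; exact_mod_cast hk3
        have hstrict : (Sr - kr) * (Sr - kr + 1) < (Sr - 1) * (Sr - 2) := by
          nlinarith [mul_pos (show (0:ℝ) < kr - 2 by linarith)
            (show (0:ℝ) < 2 * Sr - kr - 1 by linarith)]
        have h1 : c * ((Sr - kr) * (Sr - kr + 1)) < c * ((Sr - 1) * (Sr - 2)) :=
          (mul_lt_mul_iff_right₀ hc).mpr hstrict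
        have := mul_assoc c (Sr - 1) (Sr - 2)
        linarith
      obtain ⟨t1, t2, rfl⟩ := List.length_eq_two.mp hkeq
      have ht1 : t1 ∈ [t1, t2] := by simp
      have ht2 : t2 ∈ [t1, t2] := by simp
      have h1 := IH t1 ht1 (hwfc t1 ht1)
      have h2 := IH t2 ht2 (hwfc t2 ht2)
      set N1 : ℝ := (leafCount t1 : ℝ) with hN1def
      set N2 : ℝ := (leafCount t2 : ℝ) with hN2def
      have hN1 : (1 : ℝ) ≤ N1 := by rw [hN1def]; exact_mod_cast one_le_leafCount t1
      have hN2 : (1 : ℝ) ≤ N2 := by rw [hN2def]; exact_mod_cast one_le_leafCount t2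
      have hS12 : S = leafCount t1 + leafCount t2 := by simp [hSdef]
      have hSrN : Sr = N1 + N2 := by
        rw [hSr, hS12, hN1def, hN2def]; push_cast; ring
      obtain ⟨hlo1, hhi1⟩ := hlo (deltaF f t1) (by simp)
      obtain ⟨hlo2, hhi2⟩ := hlo (deltaF f t2) (by simp)
      have hkr2' : kr = 2 := by rw [hkr]; simp
      rw [hkr2'] at hhi1 hhi2
      have hA : cIndex MDM f (node [t1, t2])
          = |deltaF f t1 - deltaF f t2| / 2 + (cIndex MDM f t1 + cIndex MDM f t2) := by
        rw [hci]
        have : [t1, t2].map (deltaF f) = [deltaF f t1, deltaF f t2] := rfl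
        rw [this, MDM_pair]
        simp only [List.map_cons, List.map_nil, List.sum_cons, List.sum_nil]
        ring
      have habs : |deltaF f t1 - deltaF f t2| / 2 ≤ 2 * c * (Sr - 2) := by
        have hup : |deltaF f t1 - deltaF f t2|
            ≤ ((Sr - 2 + 1) * f 0 + (Sr - 2) * f 2) - f 0 := by
          apply abs_le.mpr
          constructor <;> linarith
        have he1 : (((Sr - 2 + 1) * f 0 + (Sr - 2) * f 2) - f 0) / 2
            = 2 * c * (Sr - 2) := by rw [hcdef]; ring
        linarith
      have hc1 : cIndex MDM f t1 ≤ c * ((N1 - 1) * (N1 - 2)) := by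
        have := h1.1
        have hma := mul_assoc c (N1 - 1) (N1 - 2)
        try rw [← hN1def] at this
        linarith
      have hc2 : cIndex MDM f t2 ≤ c * ((N2 - 1) * (N2 - 2)) := by
        have := h2.1
        have hma := mul_assoc c (N2 - 1) (N2 - 2)
        try rw [← hN2def] at this
        linarith
      have heq' : |deltaF f t1 - deltaF f t2| / 2
          + (cIndex MDM f t1 + cIndex MDM f t2) = c * ((Sr - 1) * (Sr - 2)) := by
        rw [← hA, heq]; ring
      have hid : c * ((Sr - 1) * (Sr - 2))
          = 2 * c * (Sr - 2) + c * ((N1 - 1) * (N1 - 2)) + c * ((N2 - 1) * (N2 - 2))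
            + 2 * (c * ((N1 - 1) * (N2 - 1))) := by
        rw [hSrN]; ring
      have hprod0 : (0 : ℝ) ≤ (N1 - 1) * (N2 - 1) :=
        mul_nonneg (by linarith) (by linarith)
      have hQ0 : c * ((N1 - 1) * (N2 - 1)) ≤ 0 := by linarith
      have hP0 : (N1 - 1) * (N2 - 1) = 0 := by
        by_contra hP
        have hPpos : 0 < (N1 - 1) * (N2 - 1) := lt_of_le_of_ne hprod0 (Ne.symm hP)
        nlinarith [mul_pos hc hPpos]
      have hQeq : c * ((N1 - 1) * (N2 - 1)) = 0 := by rw [hP0]; ring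
      have hce1 : cIndex MDM f t1 = c * ((N1 - 1) * (N1 - 2)) := by linarith
      have hce2 : cIndex MDM f t2 = c * ((N2 - 1) * (N2 - 2)) := by linarith
      rcases mul_eq_zero.mp hP0 with hz | hz
      · -- leafCount t1 = 1
        have hn1 : leafCount t1 = 1 := by
          have : N1 = 1 := by linarith
          rw [hN1def] at this
          exact_mod_cast this
        have ht1leaf : t1 = node [] := eq_leaf_of_lc_one (hwfc t1 ht1) hn1
        have hn2 : leafCount t2 = S - 1 := by omega
        have hiso2 : Iso t2 (comb (leafCount t2)) := by
          apply h2.2.mp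
          have hma := mul_assoc c (N2 - 1) (N2 - 2)
          try rw [← hN2def]
          linarith
        have hcombS : comb S = node [node [], comb (S - 1)] := by
          have := comb_succ_eq (n := S - 1) (by omega)
          rwa [Nat.sub_add_cancel (by omega)] at this
        rw [hcombS, ht1leaf]
        refine Iso.node (vs := [node [], comb (S - 1)]) ?_ (List.Perm.refl _)
        refine List.Forall₂.cons (iso_refl _) (List.Forall₂.cons ?_ List.Forall₂.nil)
        rwa [hn2] at hiso2
      · -- leafCount t2 = 1
        have hn2 : leafCount t2 = 1 := by
          have : N2 = 1 := by linarith
          rw [hN2def] at this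
          exact_mod_cast this
        have ht2leaf : t2 = node [] := eq_leaf_of_lc_one (hwfc t2 ht2) hn2
        have hn1 : leafCount t1 = S - 1 := by omega
        have hiso1 : Iso t1 (comb (leafCount t1)) := by
          apply h1.2.mp
          have hma := mul_assoc c (N1 - 1) (N1 - 2)
          try rw [← hN1def]
          linarith
        have hcombS : comb S = node [node [], comb (S - 1)] := by
          have := comb_succ_eq (n := S - 1) (by omega)
          rwa [Nat.sub_add_cancel (by omega)] at this
        rw [hcombS, ht2leaf]
        refine Iso.node (vs := [comb (S - 1), node []]) ?_
          (List.Perm.swap (node []) (comb (S - 1)) [])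
        refine List.Forall₂.cons ?_ (List.Forall₂.cons (iso_refl _) List.Forall₂.nil)
        rwa [hn1] at hiso1
    · -- comb implies equality
      intro hiso
      rw [iso_cIndex f _ _ hiso]
      have hcomb := (comb_facts f (hf0 0) (hf0 2) S (by omega)).2
      rw [hcomb, hcdef, hSr]
end MTree

/-- Theorem 18 for `D = MDM`: if `0 < f k < f (k-1) + f 2` for all `k ≥ 3`, then on
trees with `n ≥ 2` leaves the index `𝔠_{MDM,f}` is at most
`(f 0 + f 2)/4 · (n-1)(n-2)`, with equality exactly at the comb `K_n`. -/
theorem cIndex_MDM_le_comb (f : ℕ → ℝ) (hf0 : ∀ n, 0 ≤ f n)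
    (hf : ∀ k, 3 ≤ k → 0 < f k ∧ f k < f (k - 1) + f 2)
    (n : ℕ) (hn : 2 ≤ n) (T : MTree) (hT : T.WellFormed) (hTn : T.leafCount = n) :
    MTree.cIndex MTree.MDM f T ≤ (f 0 + f 2) / 4 * ((n : ℝ) - 1) * ((n : ℝ) - 2) ∧
    (MTree.cIndex MTree.MDM f T = (f 0 + f 2) / 4 * ((n : ℝ) - 1) * ((n : ℝ) - 2) ↔
      T.Iso (MTree.comb n)) := by
  subst hTn
  exact MTree.main_lemma f hf0 hf T hT
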